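/- Representation of monotone sublinear functionals: if π is a monotone, sublinear functional on L(𝒜), then for every f ∈ L(𝒜), π(f) = sup over m ∈ ba(𝒜,π)₊ of ∫ f dm, where ba(𝒜,π)₊ is the set of finitely additive nonnegative set functions m on 𝒜 with ∫ h dm ≤ π(h) for all h ∈ L(𝒜). In particular the supremum is over a nonempty set. -/

import Mathlib

/-- An algebra of subsets of `Ω`: contains `∅` and `univ`, closed under
complements and finite unions. -/
def IsSetAlgebra {Ω : Type*} (𝒜 : Set (Set Ω)) : Prop :=
  ∅ ∈ 𝒜 ∧ Set.univ ∈ 𝒜 ∧ (∀ A ∈ 𝒜, Aᶜ ∈ 𝒜) ∧ ∀ A ∈ 𝒜, ∀ B ∈ 𝒜, A ∪ B ∈ 𝒜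

/-- `sFun β = (1/|β|) ∑_{B ∈ β} 1_B` for a finite sequence (list) of sets `β`. -/
noncomputable def sFun {Ω : Type*} (β : List (Set Ω)) : Ω → ℝ := fun ω =>
  (β.map fun B => B.indicator (fun _ => (1 : ℝ)) ω).sum / β.length

/-- `L(𝒜)`: the linear span of the indicators of sets in `𝒜`. -/
def LSpan {Ω : Type*} (𝒜 : Set (Set Ω)) : Submodule ℝ (Ω → ℝ) :=
  Submodule.span ℝ {f | ∃ A ∈ 𝒜, f = A.indicator fun _ => (1 : ℝ)}

/-- `π` is monotone on `L(𝒜)`. -/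
def MonotoneOnL {Ω : Type*} (𝒜 : Set (Set Ω)) (π : (Ω → ℝ) → ℝ) : Prop :=
  ∀ f ∈ LSpan 𝒜, ∀ g ∈ LSpan 𝒜, f ≤ g → π f ≤ π g

/-- `π` is sublinear on `L(𝒜)`: subadditive and positively homogeneous. -/
def SublinearOnL {Ω : Type*} (𝒜 : Set (Set Ω)) (π : (Ω → ℝ) → ℝ) : Prop :=
  (∀ f ∈ LSpan 𝒜, ∀ g ∈ LSpan 𝒜, π (f + g) ≤ π f + π g) ∧
    ∀ c : ℝ, 0 ≤ c → ∀ f ∈ LSpan 𝒜, π (c • f) = c * π f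

/-- A nonnegative finitely additive set function on the algebra `𝒜`. -/
def IsFANonneg {Ω : Type*} (𝒜 : Set (Set Ω)) (m : Set Ω → ℝ) : Prop :=
  (∀ A ∈ 𝒜, 0 ≤ m A) ∧ m ∅ = 0 ∧
    ∀ A ∈ 𝒜, ∀ B ∈ 𝒜, Disjoint A B → m (A ∪ B) = m A + m B

/-- `𝒩(π) = {A ∈ 𝒜 : π(1_A) = 0}`. -/
def NullPi {Ω : Type*} (𝒜 : Set (Set Ω)) (π : (Ω → ℝ) → ℝ) : Set (Set Ω) :=
  {A ∈ 𝒜 | π (A.indicator fun _ => (1 : ℝ)) = 0}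

/-- `m` is `π`-dominated: `m(A) ≤ π(1_A)` for all `A ∈ 𝒜`. -/
def PiDominated {Ω : Type*} (𝒜 : Set (Set Ω)) (π : (Ω → ℝ) → ℝ) (m : Set Ω → ℝ) : Prop :=
  ∀ A ∈ 𝒜, m A ≤ π (A.indicator fun _ => (1 : ℝ))

/-- `m` is strictly `π`-positive: `𝒩(m) ⊆ 𝒩(π)`. -/
def StrictlyPiPositive {Ω : Type*} (𝒜 : Set (Set Ω)) (π : (Ω → ℝ) → ℝ) (m : Set Ω → ℝ) : Prop :=
  ∀ A ∈ 𝒜, m A = 0 → π (A.indicator fun _ => (1 : ℝ)) = 0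

/-- `I_π(𝓑) = inf over nonempty finite sequences β from 𝓑 of π(s(β))`. -/
noncomputable def interNumPi {Ω : Type*} (π : (Ω → ℝ) → ℝ) (𝓑 : Set (Set Ω)) : ℝ :=
  sInf {r | ∃ β : List (Set Ω), β ≠ [] ∧ (∀ B ∈ β, B ∈ 𝓑) ∧ r = π (sFun β)}

/-- The elementary integral `∫ f dm = Σ_y y · m(f⁻¹{y})` of a function with finite
range with respect to a finitely additive set function `m`. For `f = Σᵢ aᵢ 1_{Aᵢ}`
in `L(𝒜)` and finitely additive `m` this equals `Σᵢ aᵢ m(Aᵢ)`. -/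
noncomputable def faIntegral {Ω : Type*} (m : Set Ω → ℝ) (f : Ω → ℝ) : ℝ :=
  ∑ᶠ y : ℝ, y * m (f ⁻¹' {y})

/-- `ba(𝒜,π)₊`: nonnegative finitely additive set functions on `𝒜` dominated by `π`
on all of `L(𝒜)`. -/
def baPos {Ω : Type*} (𝒜 : Set (Set Ω)) (π : (Ω → ℝ) → ℝ) : Set (Set Ω → ℝ) :=
  {m | IsFANonneg 𝒜 m ∧ ∀ h ∈ LSpan 𝒜, faIntegral m h ≤ π h}


section Aux

open Set Function

variable {Ω : Type*}

lemma inter_mem_alg {𝒜 : Set (Set Ω)} (h𝒜 : IsSetAlgebra 𝒜) {A B : Set Ω}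
    (hA : A ∈ 𝒜) (hB : B ∈ 𝒜) : A ∩ B ∈ 𝒜 := by
  have : A ∩ B = (Aᶜ ∪ Bᶜ)ᶜ := by rw [Set.compl_union, compl_compl, compl_compl]
  rw [this]
  exact h𝒜.2.2.1 _ (h𝒜.2.2.2 _ (h𝒜.2.2.1 _ hA) _ (h𝒜.2.2.1 _ hB))

lemma biUnion_mem_alg {𝒜 : Set (Set Ω)} (h𝒜 : IsSetAlgebra 𝒜) {ι : Type*}
    (s : Finset ι) (t : ι → Set Ω) (h : ∀ i ∈ s, t i ∈ 𝒜) :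
    (⋃ i ∈ s, t i) ∈ 𝒜 := by
  classical
  induction s using Finset.induction with
  | empty => simpa using h𝒜.1
  | insert a s hni ih =>
    rw [Finset.set_biUnion_insert]
    exact h𝒜.2.2.2 _ (h a (Finset.mem_insert_self a s)) _
      (ih fun i hi => h i (Finset.mem_insert_of_mem hi))

/-- Measurability structure of elements of `L(𝒜)`. -/
def MeasL (𝒜 : Set (Set Ω)) (f : Ω → ℝ) : Prop :=
  (Set.range f).Finite ∧ ∀ y : ℝ, f ⁻¹' {y} ∈ 𝒜

lemma measL_of_mem {𝒜 : Set (Set Ω)} (h𝒜 : IsSetAlgebra 𝒜) {f : Ω → ℝ}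
    (hf : f ∈ LSpan 𝒜) : MeasL 𝒜 f := by
  classical
  induction hf using Submodule.span_induction with
  | mem x hx =>
    obtain ⟨A, hA, rfl⟩ := hx
    constructor
    · exact (Set.finite_singleton (1:ℝ) |>.insert 0).subset (by
        rintro y ⟨ω, rfl⟩
        by_cases hω : ω ∈ A <;> simp [Set.indicator_apply, hω])
    · intro y
      by_cases h1 : y = 1
      · subst h1
        have : (A.indicator (fun _ => (1:ℝ))) ⁻¹' {1} = A := by
          ext ω; by_cases hω : ω ∈ A <;> simp [Set.indicator_apply, hω]
        rw [this]; exact hA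
      by_cases h0 : y = 0
      · subst h0
        have : (A.indicator (fun _ => (1:ℝ))) ⁻¹' {0} = Aᶜ := by
          ext ω; by_cases hω : ω ∈ A <;> simp [Set.indicator_apply, hω]
        rw [this]; exact h𝒜.2.2.1 _ hA
      · have : (A.indicator (fun _ => (1:ℝ))) ⁻¹' {y} = ∅ := by
          ext ω; by_cases hω : ω ∈ A <;> simp [Set.indicator_apply, hω, h1, h0, Ne.symm h1, Ne.symm h0]
        rw [this]; exact h𝒜.1
  | zero =>
    constructor
    · exact (Set.finite_singleton (0:ℝ)).subset (by rintro y ⟨ω, rfl⟩; simp)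
    · intro y
      by_cases h0 : y = 0
      · subst h0
        have : ((0 : Ω → ℝ)) ⁻¹' {0} = Set.univ := by ext ω; simp
        rw [this]; exact h𝒜.2.1
      · have : ((0 : Ω → ℝ)) ⁻¹' {y} = ∅ := by ext ω; simp [Ne.symm h0]
        rw [this]; exact h𝒜.1
  | add x y hx hy ihx ihy =>
    obtain ⟨hxfin, hxfib⟩ := ihx
    obtain ⟨hyfin, hyfib⟩ := ihy
    constructor
    · refine ((hxfin.prod hyfin).image (fun p => p.1 + p.2)).subset ?_
      rintro z ⟨ω, rfl⟩
      exact ⟨(x ω, y ω), ⟨⟨ω, rfl⟩, ⟨ω, rfl⟩⟩, rfl⟩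
    · intro z
      have hset : (x + y) ⁻¹' {z} = ⋃ a ∈ hxfin.toFinset, (x ⁻¹' {a} ∩ y ⁻¹' {z - a}) := by
        ext ω
        simp only [Set.mem_preimage, Set.mem_singleton_iff, Pi.add_apply, Set.mem_iUnion,
          Set.mem_inter_iff, Set.Finite.mem_toFinset, Set.mem_range]
        constructor
        · intro h
          exact ⟨x ω, ⟨⟨ω, rfl⟩, rfl, by linarith⟩⟩
        · rintro ⟨a, _, rfl, h2⟩
          linarith
      rw [hset]
      exact biUnion_mem_alg h𝒜 _ _ fun a _ => inter_mem_alg h𝒜 (hxfib a) (hyfib (z - a))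
  | smul c x hx ihx =>
    obtain ⟨hxfin, hxfib⟩ := ihx
    by_cases hc : c = 0
    · subst hc
      constructor
      · exact (Set.finite_singleton (0:ℝ)).subset (by rintro y ⟨ω, rfl⟩; simp)
      · intro y
        by_cases h0 : y = 0
        · subst h0
          have : ((0 : ℝ) • x) ⁻¹' {0} = Set.univ := by ext ω; simp
          rw [this]; exact h𝒜.2.1
        · have : ((0 : ℝ) • x) ⁻¹' {y} = ∅ := by ext ω; simp [Ne.symm h0]
          rw [this]; exact h𝒜.1
    · constructor
      · refine (hxfin.image (c * ·)).subset ?_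
        rintro y ⟨ω, rfl⟩
        exact ⟨x ω, ⟨ω, rfl⟩, rfl⟩
      · intro y
        have : (c • x) ⁻¹' {y} = x ⁻¹' {y / c} := by
          ext ω
          simp only [Set.mem_preimage, Set.mem_singleton_iff, Pi.smul_apply, smul_eq_mul]
          rw [eq_div_iff hc]
          constructor <;> intro h <;> linarith [mul_comm c (x ω)]
        rw [this]; exact hxfib _

lemma indicator_mem_LSpan {𝒜 : Set (Set Ω)} {A : Set Ω} (hA : A ∈ 𝒜) :
    (A.indicator fun _ => (1:ℝ)) ∈ LSpan 𝒜 :=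
  Submodule.subset_span ⟨A, hA, rfl⟩

/-- The elementary integral of `f ∈ L(𝒜)` w.r.t. `m A = g(1_A)` equals `g f`. -/
lemma faIntegral_eq_linear {𝒜 : Set (Set Ω)} (h𝒜 : IsSetAlgebra 𝒜)
    (g : ↥(LSpan 𝒜) →ₗ[ℝ] ℝ) (m : Set Ω → ℝ)
    (hm : ∀ A, (hA : A ∈ 𝒜) → m A = g ⟨A.indicator fun _ => (1:ℝ), indicator_mem_LSpan hA⟩)
    {f : Ω → ℝ} (hf : f ∈ LSpan 𝒜) : faIntegral m f = g ⟨f, hf⟩ := by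
  classical
  obtain ⟨hfin, hfib⟩ := measL_of_mem h𝒜 hf
  have hm0 : m ∅ = 0 := by
    rw [hm ∅ h𝒜.1]
    have : (⟨(∅ : Set Ω).indicator fun _ => (1:ℝ), indicator_mem_LSpan h𝒜.1⟩ :
        ↥(LSpan 𝒜)) = 0 := by
      ext; simp
    rw [this, map_zero]
  have hsupp : Function.support (fun y : ℝ => y * m (f ⁻¹' {y})) ⊆ hfin.toFinset := by
    intro y hy
    simp only [Function.mem_support] at hy
    rw [Set.Finite.coe_toFinset]
    by_contra hyr
    have : f ⁻¹' {y} = ∅ := by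
      ext ω
      simp only [Set.mem_preimage, Set.mem_singleton_iff, Set.mem_empty_iff_false, iff_false]
      intro h; exact hyr ⟨ω, h⟩
    rw [this, hm0, mul_zero] at hy
    exact hy rfl
  rw [faIntegral, finsum_eq_finset_sum_of_support_subset _ hsupp]
  have key : (⟨f, hf⟩ : ↥(LSpan 𝒜)) =
      ∑ y ∈ hfin.toFinset, y • (⟨(f ⁻¹' {y}).indicator fun _ => (1:ℝ),
        indicator_mem_LSpan (hfib y)⟩ : ↥(LSpan 𝒜)) := by
    ext ω
    simp only [Submodule.coe_sum, Submodule.coe_smul]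
    rw [Finset.sum_apply]
    rw [Finset.sum_eq_single_of_mem (f ω) (by simp [Set.Finite.mem_toFinset])]
    · simp [Set.indicator_apply]
    · intro y _ hy
      simp [Set.indicator_apply, Ne.symm hy]
  calc ∑ y ∈ hfin.toFinset, y * m (f ⁻¹' {y})
      = ∑ y ∈ hfin.toFinset, g (y • (⟨(f ⁻¹' {y}).indicator fun _ => (1:ℝ),
          indicator_mem_LSpan (hfib y)⟩ : ↥(LSpan 𝒜))) := by
        refine Finset.sum_congr rfl fun y _ => ?_
        rw [map_smul, smul_eq_mul, hm _ (hfib y)]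
    _ = g (∑ y ∈ hfin.toFinset, y • (⟨(f ⁻¹' {y}).indicator fun _ => (1:ℝ),
          indicator_mem_LSpan (hfib y)⟩ : ↥(LSpan 𝒜))) := (map_sum g _ _).symm
    _ = g ⟨f, hf⟩ := by rw [← key]

end Aux


section Main

open Set Function

variable {Ω : Type*}

lemma exists_dominating (𝒜 : Set (Set Ω)) (h𝒜 : IsSetAlgebra 𝒜) (π : (Ω → ℝ) → ℝ)
    (hmono : MonotoneOnL 𝒜 π) (hsub : SublinearOnL 𝒜 π)
    (f₀ : Ω → ℝ) (hf₀ : f₀ ∈ LSpan 𝒜) (hne : f₀ ≠ 0) :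
    ∃ m ∈ baPos 𝒜 π, faIntegral m f₀ = π f₀ := by
  classical
  have h0L : (0 : Ω → ℝ) ∈ LSpan 𝒜 := (LSpan 𝒜).zero_mem
  have hπ0 : π 0 = 0 := by
    have := hsub.2 0 le_rfl 0 h0L
    simpa using this
  have hπneg : ∀ c : ℝ, ∀ f ∈ LSpan 𝒜, c * π f ≤ π (c • f) := by
    intro c f hfL
    rcases le_or_gt 0 c with hc | hc
    · rw [hsub.2 c hc f hfL]
    · have h1 : π (c • f + (-c) • f) ≤ π (c • f) + π ((-c) • f) :=
        hsub.1 _ ((LSpan 𝒜).smul_mem c hfL) _ ((LSpan 𝒜).smul_mem (-c) hfL)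
      have h2 : c • f + (-c) • f = (0 : Ω → ℝ) := by
        rw [← add_smul]; simp
      rw [h2, hπ0, hsub.2 (-c) (by linarith) f hfL] at h1
      linarith
  set x₀ : ↥(LSpan 𝒜) := ⟨f₀, hf₀⟩ with hx₀def
  have hx₀ : x₀ ≠ 0 := fun h => hne (congrArg Subtype.val h)
  set N : ↥(LSpan 𝒜) → ℝ := fun x => π x with hNdef
  have N_hom : ∀ c : ℝ, 0 < c → ∀ x : ↥(LSpan 𝒜), N (c • x) = c * N x := by
    intro c hc x
    show π ((c • x : ↥(LSpan 𝒜)) : Ω → ℝ) = c * π (x : Ω → ℝ)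
    rw [Submodule.coe_smul]
    exact hsub.2 c hc.le _ x.2
  have N_add : ∀ x y : ↥(LSpan 𝒜), N (x + y) ≤ N x + N y := by
    intro x y
    show π ((x + y : ↥(LSpan 𝒜)) : Ω → ℝ) ≤ π (x : Ω → ℝ) + π (y : Ω → ℝ)
    rw [Submodule.coe_add]
    exact hsub.1 _ x.2 _ y.2
  set F := LinearPMap.mkSpanSingleton (σ := RingHom.id ℝ) x₀ (π f₀) hx₀ with hFdef
  have hF : ∀ x : F.domain, F x ≤ N x := by
    rintro ⟨x, hx⟩
    have hx' : x ∈ Submodule.span ℝ {x₀} := hx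
    obtain ⟨c, hc⟩ := Submodule.mem_span_singleton.mp hx'
    have hval : F ⟨x, hx⟩ = c • π f₀ := by
      subst hc
      exact LinearPMap.mkSpanSingleton'_apply _ _ _ c _
    rw [hval]
    have : N x = π (c • f₀) := by
      subst hc
      show π ((c • x₀ : ↥(LSpan 𝒜)) : Ω → ℝ) = _
      rw [Submodule.coe_smul]
    rw [this, smul_eq_mul]
    exact hπneg c f₀ hf₀
  obtain ⟨g, hext, hle⟩ := exists_extension_of_le_sublinear F N N_hom N_add hF
  have hg_f₀ : g x₀ = π f₀ := by
    have h1 := hext ⟨x₀, Submodule.mem_span_singleton_self x₀⟩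
    have h2 : F ⟨x₀, Submodule.mem_span_singleton_self x₀⟩ = π f₀ :=
      LinearPMap.mkSpanSingleton'_apply_self _ _ _ _
    rw [h2] at h1
    exact h1
  set m : Set Ω → ℝ := fun A =>
    if hA : A ∈ 𝒜 then g ⟨A.indicator fun _ => (1:ℝ), indicator_mem_LSpan hA⟩ else 0
    with hmdef
  have hm : ∀ A, (hA : A ∈ 𝒜) →
      m A = g ⟨A.indicator fun _ => (1:ℝ), indicator_mem_LSpan hA⟩ := by
    intro A hA; simp only [hmdef, dif_pos hA]
  have hint : ∀ h, (hh : h ∈ LSpan 𝒜) → faIntegral m h = g ⟨h, hh⟩ :=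
    fun h hh => faIntegral_eq_linear h𝒜 g m hm hh
  have hgle : ∀ h, (hh : h ∈ LSpan 𝒜) → g ⟨h, hh⟩ ≤ π h := fun h hh => hle ⟨h, hh⟩
  have hnn : ∀ A, (hA : A ∈ 𝒜) → 0 ≤ g ⟨A.indicator fun _ => (1:ℝ), indicator_mem_LSpan hA⟩ := by
    intro A hA
    set v : ↥(LSpan 𝒜) := ⟨A.indicator fun _ => (1:ℝ), indicator_mem_LSpan hA⟩
    have h1 : g (-v) ≤ N (-v) := hle (-v)
    have h2 : N (-v) = π (-(A.indicator fun _ => (1:ℝ))) := by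
      show π ((-v : ↥(LSpan 𝒜)) : Ω → ℝ) = _
      rw [Submodule.coe_neg]
    have h3 : π (-(A.indicator fun _ => (1:ℝ))) ≤ π 0 := by
      apply hmono _ ((LSpan 𝒜).neg_mem (indicator_mem_LSpan hA)) _ h0L
      intro ω
      simp only [Pi.neg_apply, Pi.zero_apply]
      exact neg_nonpos.mpr (Set.indicator_nonneg (fun _ _ => zero_le_one) ω)
    rw [map_neg] at h1
    rw [h2] at h1
    have := h3.trans_eq hπ0
    linarith
  refine ⟨m, ⟨⟨?_, ?_, ?_⟩, ?_⟩, ?_⟩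
  · intro A hA
    rw [hm A hA]
    exact hnn A hA
  · rw [hm ∅ h𝒜.1]
    have : (⟨(∅ : Set Ω).indicator fun _ => (1:ℝ), indicator_mem_LSpan h𝒜.1⟩ :
        ↥(LSpan 𝒜)) = 0 := by ext; simp
    rw [this, map_zero]
  · intro A hA B hB hAB
    rw [hm A hA, hm B hB, hm _ (h𝒜.2.2.2 _ hA _ hB)]
    have hind : (A ∪ B).indicator (fun _ => (1:ℝ)) =
        A.indicator (fun _ => (1:ℝ)) + B.indicator (fun _ => (1:ℝ)) :=
      Set.indicator_union_of_disjoint hAB _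
    have : (⟨(A ∪ B).indicator fun _ => (1:ℝ), indicator_mem_LSpan (h𝒜.2.2.2 _ hA _ hB)⟩ :
        ↥(LSpan 𝒜)) = ⟨A.indicator fun _ => (1:ℝ), indicator_mem_LSpan hA⟩ +
          ⟨B.indicator fun _ => (1:ℝ), indicator_mem_LSpan hB⟩ := by
      apply Subtype.ext
      rw [Submodule.coe_add]
      exact hind
    rw [this, map_add]
  · intro h hh
    rw [hint h hh]
    exact hgle h hh
  · rw [hint f₀ hf₀]
    exact hg_f₀

end Main

/-- **Representation of monotone sublinear functionals**: for every `f ∈ L(𝒜)`,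
`π(f) = sup_{m ∈ ba(𝒜,π)₊} ∫ f dm`, the supremum being over a nonempty set. -/
theorem pi_eq_sSup_integral {Ω : Type*} [Nonempty Ω] (𝒜 : Set (Set Ω))
    (h𝒜 : IsSetAlgebra 𝒜) (π : (Ω → ℝ) → ℝ) (hmono : MonotoneOnL 𝒜 π)
    (hsub : SublinearOnL 𝒜 π) :
    (baPos 𝒜 π).Nonempty ∧
      ∀ f ∈ LSpan 𝒜, π f = sSup ((fun m => faIntegral m f) '' baPos 𝒜 π) := by
  classical
  have huniv : (Set.univ.indicator (fun _ => (1:ℝ))) ∈ LSpan 𝒜 := indicator_mem_LSpan h𝒜.2.1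
  have hune : (Set.univ.indicator (fun _ => (1:ℝ)) : Ω → ℝ) ≠ 0 := by
    obtain ⟨ω⟩ := ‹Nonempty Ω›
    intro h
    have := congrFun h ω
    simp at this
  obtain ⟨m₀, hm₀, _⟩ := exists_dominating 𝒜 h𝒜 π hmono hsub _ huniv hune
  refine ⟨⟨m₀, hm₀⟩, ?_⟩
  intro f hfL
  have hub : ∀ r ∈ (fun m => faIntegral m f) '' baPos 𝒜 π, r ≤ π f := by
    rintro r ⟨m, hm, rfl⟩
    exact hm.2 f hfL
  have hmem : π f ∈ (fun m => faIntegral m f) '' baPos 𝒜 π := by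
    by_cases hf0 : f = 0
    · subst hf0
      have hz : faIntegral m₀ (0 : Ω → ℝ) = 0 := by
        unfold faIntegral
        apply finsum_eq_zero_of_forall_eq_zero
        intro y
        by_cases hy : y = 0
        · simp [hy]
        · have : ((0 : Ω → ℝ)) ⁻¹' {y} = ∅ := by ext ω; simp [Ne.symm hy]
          rw [this, hm₀.1.2.1, mul_zero]
      have hπ0 : π 0 = 0 := by
        simpa using hsub.2 0 le_rfl 0 ((LSpan 𝒜).zero_mem)
      exact ⟨m₀, hm₀, by show faIntegral m₀ 0 = π 0; rw [hz, hπ0]⟩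
    · obtain ⟨m, hm, heq⟩ := exists_dominating 𝒜 h𝒜 π hmono hsub f hfL hf0
      exact ⟨m, hm, heq⟩
  exact le_antisymm (le_csSup ⟨π f, hub⟩ hmem) (csSup_le ⟨π f, hmem⟩ hub)
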